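/- Let G be a group acting acylindrically by isometries on a proper metric space X. Then either X is bounded or the action of G is metrically proper. -/

import Mathlib

/-- An acylindrical isometric action on a proper metric space is metrically proper
unless the space is bounded. -/
theorem stmt9 {G X : Type*} [Group G] [MetricSpace X] [ProperSpace X] [MulAction G X]
    (hiso : ∀ (g : G) (x y : X), dist (g • x) (g • y) = dist x y)
    (hacyl : ∀ ε : ℝ, 0 ≤ ε → ∃ R : ℝ, ∃ N : ℕ, ∀ x y : X, R ≤ dist x y →
      {g : G | dist (g • x) x ≤ ε ∧ dist (g • y) y ≤ ε}.Finite ∧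
      {g : G | dist (g • x) x ≤ ε ∧ dist (g • y) y ≤ ε}.ncard ≤ N) :
    Bornology.IsBounded (Set.univ : Set X) ∨
      ∀ (x₀ : X) (R : ℝ), {g : G | dist (g • x₀) x₀ ≤ R}.Finite := by
  by_cases hb : Bornology.IsBounded (Set.univ : Set X)
  · exact Or.inl hb
  right
  intro x₀ R
  set R' : ℝ := max R 0 with hR'def
  have hR'0 : (0 : ℝ) ≤ R' := le_max_right _ _
  have hsub : {g : G | dist (g • x₀) x₀ ≤ R} ⊆ {g : G | dist (g • x₀) x₀ ≤ R'} :=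
    fun g hg => by
      simp only [Set.mem_setOf_eq] at hg ⊢
      exact le_trans hg (le_max_left R 0)
  refine Set.Finite.subset ?_ hsub
  set ε : ℝ := 2 * R' + 1 with hεdef
  have hε0 : (0 : ℝ) ≤ ε := by positivity
  obtain ⟨R₀, N, hRN⟩ := hacyl ε hε0
  -- find a far point y
  have hy : ∃ y : X, R₀ ≤ dist x₀ y := by
    by_contra h
    push_neg at h
    refine hb (Bornology.IsBounded.subset (Metric.isBounded_closedBall (x := x₀) (r := R₀)) ?_)
    intro y _
    rw [Metric.mem_closedBall, dist_comm]
    exact (h y).le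
  obtain ⟨y, hy⟩ := hy
  obtain ⟨Ffin, -⟩ := hRN x₀ y hy
  set S : Set G := {g : G | dist (g • x₀) x₀ ≤ R'} with hSdef
  by_contra hSinf
  have hSinf : S.Infinite := hSinf
  -- all g • y lie in a compact ball
  have hball : ∀ g ∈ S, g • y ∈ Metric.closedBall x₀ (dist y x₀ + R') := by
    intro g hg
    have h1 : dist (g • y) x₀ ≤ dist (g • y) (g • x₀) + dist (g • x₀) x₀ := dist_triangle _ _ _
    rw [hiso] at h1
    exact Metric.mem_closedBall.2 (h1.trans (add_le_add le_rfl hg))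
  have htb := (isCompact_closedBall x₀ (dist y x₀ + R')).totallyBounded
  obtain ⟨t, htfin, htcov⟩ := Metric.totallyBounded_iff.1 htb (1/2) (by norm_num)
  -- pigeonhole: some piece is infinite
  have hpiece : ∃ c ∈ t, {g | g ∈ S ∧ g • y ∈ Metric.ball c (1/2)}.Infinite := by
    by_contra hall
    push_neg at hall
    have : S ⊆ ⋃ c ∈ t, {g | g ∈ S ∧ g • y ∈ Metric.ball c (1/2)} := by
      intro g hg
      have := htcov (hball g hg)
      simp only [Set.mem_iUnion] at this ⊢
      obtain ⟨c, hc, hgc⟩ := this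
      exact ⟨c, hc, hg, hgc⟩
    exact hSinf (Set.Finite.subset (htfin.biUnion hall) this)
  obtain ⟨c, -, hcinf⟩ := hpiece
  obtain ⟨h, hhS, hhc⟩ := hcinf.nonempty
  -- the piece injects into the finite acylindricity set
  apply hcinf
  have hsub2 : {g | g ∈ S ∧ g • y ∈ Metric.ball c (1/2)} ⊆
      (fun k => h * k) '' {g : G | dist (g • x₀) x₀ ≤ ε ∧ dist (g • y) y ≤ ε} := by
    rintro g ⟨hgS, hgc⟩
    refine ⟨h⁻¹ * g, ⟨?_, ?_⟩, by group⟩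
    · have key : dist ((h⁻¹ * g) • x₀) x₀ = dist (g • x₀) (h • x₀) := by
        rw [← hiso h ((h⁻¹ * g) • x₀) x₀, smul_smul]
        group
      rw [key]
      have h1 : dist (g • x₀) (h • x₀) ≤ dist (g • x₀) x₀ + dist x₀ (h • x₀) :=
        dist_triangle _ _ _
      rw [dist_comm x₀ (h • x₀)] at h1
      have hg' : dist (g • x₀) x₀ ≤ R' := hgS
      have hh' : dist (h • x₀) x₀ ≤ R' := hhS
      have : ε = 2 * R' + 1 := hεdef
      linarith
    · have key : dist ((h⁻¹ * g) • y) y = dist (g • y) (h • y) := by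
        rw [← hiso h ((h⁻¹ * g) • y) y, smul_smul]
        group
      rw [key]
      have h1 : dist (g • y) (h • y) ≤ dist (g • y) c + dist c (h • y) := dist_triangle _ _ _
      have h2 : dist (g • y) c < 1/2 := Metric.mem_ball.1 hgc
      have h3 : dist c (h • y) < 1/2 := by rw [dist_comm]; exact Metric.mem_ball.1 hhc
      linarith
  exact Set.Finite.subset (Ffin.image _) hsub2
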